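/- In any additively idempotent semiring satisfying the identities x²y = xy and x²y² = x² + y² for all x, y, the identity xyz = yxz holds for all x, y, z. -/
import Mathlib


theorem stmt_2 {S : Type*} [Add S] [Mul S]
    (add_comm : ∀ x y : S, x + y = y + x)
    (add_assoc : ∀ x y z : S, x + y + z = x + (y + z))
    (add_idem : ∀ x : S, x + x = x)
    (mul_assoc : ∀ x y z : S, x * y * z = x * (y * z))
    (left_distrib : ∀ x y z : S, x * (y + z) = x * y + x * z)
    (right_distrib : ∀ x y z : S, (x + y) * z = x * z + y * z)
    (h1 : ∀ x y : S, x * x * y = x * y)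
    (h2 : ∀ x y : S, x * x * (y * y) = x * x + y * y) :
    ∀ x y z : S, x * y * z = y * x * z := by
  intro x y z
  have key : x * x * (y * y) = y * y * (x * x) := by
    rw [h2, add_comm, h2]
  calc x * y * z = x * (y * z) := mul_assoc x y z
    _ = x * x * (y * z) := (h1 x (y * z)).symm
    _ = x * x * (y * y * z) := congrArg (x * x * ·) (h1 y z).symm
    _ = x * x * (y * y) * z := (mul_assoc _ _ _).symm
    _ = y * y * (x * x) * z := by rw [key]
    _ = y * y * (x * x * z) := mul_assoc _ _ _
    _ = y * y * (x * z) := congrArg (y * y * ·) (h1 x z)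
    _ = y * (x * z) := h1 y (x * z)
    _ = y * x * z := (mul_assoc y x z).symm
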